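/- arXiv:2203.13969 — 2 statements merged into one kernel-verified Lean document; each statement's English description precedes it below -/
import Mathlib

section
/- Let V be a finite set and let I ⊆ {0,1}^V be downward closed with respect to the componentwise order, with feasible set F := {0,1}^V \ I. Let β'^{(1)}, …, β'^{(K)} ∈ I and let S := {β ∈ {0,1}^V : for every k there exists u ∈ V with β'^{(k)}_u = 0 and β_u = 1} be the set of binary vectors satisfying all K No-Good constraints. Then F ⊆ S; consequently, if β* minimizes Σ_{u∈V} β_u over S and β* ∈ F, then Σ_{u∈V} β*_u = min_{β ∈ F} Σ_{u∈V} β_u, i.e., β* is an optimal feasible placement. -/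
/-- The feasible set `F = {0,1}^V \ I` is contained in the set `S`
of binary vectors satisfying the No-Good constraints of any infeasible
placements `β'⁽¹⁾,…,β'⁽ᴷ⁾ ∈ I`; hence a minimizer of `Σ_u β_u` over `S` that
happens to be feasible is an optimal feasible placement. -/
theorem noGood_relaxation_optimality {V : Type*} [Fintype V] (I : Set (V → Bool))
    (hdc : ∀ β β' : V → Bool, β' ∈ I → β ≤ β' → β ∈ I)
    (K : ℕ) (β' : Fin K → V → Bool) (hβ' : ∀ k, β' k ∈ I)
    (S : Set (V → Bool))
    (hS : S = {β | ∀ k : Fin K, ∃ u : V, β' k u = false ∧ β u = true}) :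
    (∀ β : V → Bool, β ∉ I → β ∈ S) ∧
    (∀ βstar : V → Bool, βstar ∈ S → βstar ∉ I →
      (∀ β ∈ S, (∑ u : V, if βstar u then 1 else 0 : ℕ) ≤
        ∑ u : V, if β u then 1 else 0) →
      ∀ β : V → Bool, β ∉ I →
        (∑ u : V, if βstar u then 1 else 0 : ℕ) ≤ ∑ u : V, if β u then 1 else 0) := by
  have hFS : ∀ β : V → Bool, β ∉ I → β ∈ S := by
    intro β hβ
    rw [hS]
    intro k
    by_contra h
    push_neg at h
    apply hβ
    refine hdc β (β' k) (hβ' k) ?_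
    intro u
    cases hb : β u with
    | false => simp [hb]
    | true =>
      cases hb' : β' k u with
      | true => simp [hb, hb']
      | false => exact absurd hb (by simpa [hb'] using h u)
  exact ⟨hFS, fun βstar _ _ hmin β hβ => hmin β (hFS β hβ)⟩
end

section
/- Let f, f_max, γ, M be real numbers with f_max > 0, γ > 0, and M > |f|/f_max + γ. Suppose π_p, π_n ∈ {0,1} satisfy −M·(1 − π_p) < f/f_max − γ ≤ M·π_p and −M·(1 − π_n) < −f/f_max − γ ≤ M·π_n. Then π_p·π_n = 0 (so π_p + π_n ∈ {0,1}), and π_p + π_n = 1 if and only if |f| > γ·f_max. -/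
/-- correctness of the big-M linearization of the overload-induced
tripping indicator: `π_p·π_n = 0` and `π_p + π_n = 1 ↔ |f| > γ·f_max`. -/
theorem tripping_indicator_linearization (f fmax γ M πp πn : ℝ)
    (hfmax : 0 < fmax) (hγ : 0 < γ) (hM : |f| / fmax + γ < M)
    (hπp : πp = 0 ∨ πp = 1) (hπn : πn = 0 ∨ πn = 1)
    (h1 : -M * (1 - πp) < f / fmax - γ) (h2 : f / fmax - γ ≤ M * πp)
    (h3 : -M * (1 - πn) < -f / fmax - γ) (h4 : -f / fmax - γ ≤ M * πn) :
    πp * πn = 0 ∧ (πp + πn = 1 ↔ |f| > γ * fmax) := by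
  have e1 : γ < f / fmax ↔ γ * fmax < f := lt_div_iff₀ hfmax
  have e2 : γ < -(f / fmax) ↔ γ * fmax < -f := by
    rw [← neg_div]; exact lt_div_iff₀ hfmax
  have habs : γ * fmax < |f| ↔ γ * fmax < f ∨ γ * fmax < -f := lt_abs
  rw [neg_div] at h3 h4
  rcases hπp with rfl | rfl <;> rcases hπn with rfl | rfl <;>
    norm_num at h1 h2 h3 h4
  · refine ⟨by ring, ?_⟩
    constructor
    · intro h; norm_num at h
    · intro h
      rcases habs.mp h with h' | h'
      · linarith [e1.mpr h']
      · linarith [e2.mpr h']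
  · refine ⟨by ring, ?_⟩
    constructor
    · intro _; exact habs.mpr (Or.inr (e2.mp h3))
    · intro _; norm_num
  · refine ⟨by ring, ?_⟩
    constructor
    · intro _; exact habs.mpr (Or.inl (e1.mp h1))
    · intro _; norm_num
  · exact absurd (by linarith : γ < -γ) (by linarith)
end
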